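/- Let q ≥ 2 be an integer and define f_n(q) = Σ_{i=1}^{n}(−1)^{i−1}(2i−1)q^{n+1−i} + (−1)^n(n+1) for n ≥ 1. Then f_n(q) > 0 for all n ≥ 1 and all integers q ≥ 3; moreover f_n(2) = 0 if and only if n = 1. -/

import Mathlib

open Finset

/-- The value of the Hall polynomial `f_n` at an integer `q`:
`f_n(q) = Σ_{i=1}^n (-1)^{i-1}(2i-1) q^{n+1-i} + (-1)^n (n+1)` for `n ≥ 1`. -/
def hallFval (n : ℕ) (q : ℤ) : ℤ :=
  (∑ i ∈ Finset.Icc 1 n, (-1 : ℤ) ^ (i - 1) * (2 * i - 1) * q ^ (n + 1 - i)) +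
    (-1 : ℤ) ^ n * (n + 1)

lemma hallFval_zero (q : ℤ) : hallFval 0 q = 1 := by simp [hallFval]

lemma hallFval_rec (n : ℕ) (q : ℤ) :
    hallFval (n + 1) q = q * hallFval n q + (-1) ^ n * (n * q - n - 2) := by
  unfold hallFval
  rw [Finset.sum_Icc_succ_top (Nat.le_add_left 1 n)]
  have h : ∀ i ∈ Finset.Icc 1 n,
      (-1 : ℤ) ^ (i - 1) * (2 * i - 1) * q ^ (n + 1 + 1 - i)
        = q * ((-1 : ℤ) ^ (i - 1) * (2 * i - 1) * q ^ (n + 1 - i)) := by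
    intro i hi
    simp only [Finset.mem_Icc] at hi
    have h2 : n + 1 + 1 - i = (n + 1 - i) + 1 := by omega
    rw [h2, pow_succ]; ring
  rw [Finset.sum_congr rfl h, ← Finset.mul_sum]
  have h3 : n + 1 - 1 = n := by omega
  have h4 : n + 1 + 1 - (n + 1) = 1 := by omega
  rw [h3, h4]
  push_cast
  ring

lemma hallFval_one (q : ℤ) : hallFval 1 q = q - 2 := by
  have := hallFval_rec 0 q
  simp [hallFval_zero] at this
  rw [this]; ring

lemma hallFval_ge3 : ∀ n : ℕ, 1 ≤ n → ∀ q : ℤ, 3 ≤ q → (n : ℤ) * (q - 2) ≤ hallFval n q := by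
  intro n hn
  induction n, hn using Nat.le_induction with
  | base => intro q hq; rw [hallFval_one]; push_cast; linarith
  | succ n hn ih =>
      intro q hq
      have hf := ih q hq
      have hn' : (1 : ℤ) ≤ (n : ℤ) := by exact_mod_cast hn
      rw [hallFval_rec]
      rcases neg_one_pow_eq_or ℤ n with h | h <;> rw [h] <;> push_cast <;>
        nlinarith [mul_le_mul_of_nonneg_left hf (by linarith : (0:ℤ) ≤ q),
          sq_nonneg (q - 3), mul_nonneg (by linarith : (0:ℤ) ≤ (n:ℤ) - 1)
            (mul_nonneg (by linarith : (0:ℤ) ≤ q - 1) (by linarith : (0:ℤ) ≤ q - 3))]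

lemma hallFval_two_two : hallFval 2 2 = 1 := by
  have := hallFval_rec 1 2
  rw [hallFval_one] at this
  norm_num at this
  exact this

lemma hallFval_ge_two : ∀ n : ℕ, 2 ≤ n → (n : ℤ) - 1 ≤ hallFval n 2 := by
  intro n hn
  induction n, hn using Nat.le_induction with
  | base => rw [hallFval_two_two]; norm_num
  | succ n hn ih =>
      have hn' : (2 : ℤ) ≤ (n : ℤ) := by exact_mod_cast hn
      rw [hallFval_rec]
      rcases neg_one_pow_eq_or ℤ n with h | h <;> rw [h] <;> push_cast <;> linarith

/-- `f_n(q) > 0` for all `n ≥ 1` and all integers `q ≥ 3`; moreover, for `n ≥ 1`,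
`f_n(2) = 0` if and only if `n = 1`. -/
theorem hallFval_pos_and_vanishing :
    (∀ n : ℕ, 1 ≤ n → ∀ q : ℤ, 3 ≤ q → 0 < hallFval n q) ∧
    (∀ n : ℕ, 1 ≤ n → (hallFval n 2 = 0 ↔ n = 1)) := by
  constructor
  · intro n hn q hq
    have h1 := hallFval_ge3 n hn q hq
    have hn' : (1 : ℤ) ≤ (n : ℤ) := by exact_mod_cast hn
    nlinarith
  · intro n hn
    constructor
    · intro h
      by_contra hne
      have h2 : 2 ≤ n := by omega
      have := hallFval_ge_two n h2
      have hn' : (2 : ℤ) ≤ (n : ℤ) := by exact_mod_cast h2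
      linarith
    · rintro rfl
      rw [hallFval_one]; ring
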